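/- Let G be a finite connected graph and x a vertex of G. Then gp(G − x) ≤ 2·gp(G). -/

import Mathlib

open SimpleGraph

/-- `S` is a *general position set* of `G`: no three distinct vertices of `S`
lie on a common shortest path (geodesic) of `G`. -/
def IsGPSet {V : Type*} (G : SimpleGraph V) (S : Set V) : Prop :=
  ∀ ⦃u v w : V⦄, u ∈ S → v ∈ S → w ∈ S → u ≠ v → u ≠ w → v ≠ w →
    ∀ p : G.Walk u v, p.IsPath → p.length = G.dist u v → w ∉ p.support

/-- The *general position number* of `G`: the maximum cardinality of a
general position set. -/
noncomputable def gpNum {V : Type*} [Fintype V] (G : SimpleGraph V) : ℕ :=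
  sSup {n : ℕ | ∃ S : Finset V, IsGPSet G ↑S ∧ S.card = n}

/-- The vertex-deleted subgraph `G - x`, induced on `V(G) \ {x}`. -/
def delVert {V : Type*} (G : SimpleGraph V) (x : V) : SimpleGraph {y : V // y ≠ x} :=
  G.comap Subtype.val

namespace GPAux

variable {V : Type*} [DecidableEq V] {G : SimpleGraph V} {x : V}

/-- Inclusion homomorphism from `G - x` to `G`. -/
def homDel (G : SimpleGraph V) (x : V) : delVert G x →g G :=
  SimpleGraph.Hom.comap Subtype.val G

/-- `w` lies strictly between `u` and `x` on some geodesic (interval condition). -/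
def Below (G : SimpleGraph V) (x w u : V) : Prop :=
  w ≠ u ∧ G.dist u w + G.dist w x = G.dist u x

/-- Lift a walk of `G` avoiding `x` to a walk of `G - x`. -/
lemma exists_lift :
    ∀ {u v : V} (p : G.Walk u v) (hp : ∀ y ∈ p.support, y ≠ x),
    ∃ q : (delVert G x).Walk ⟨u, hp u p.start_mem_support⟩ ⟨v, hp v p.end_mem_support⟩,
      q.map (homDel G x) = p := by
  intro u v p
  induction p with
  | nil => exact fun hp => ⟨Walk.nil, rfl⟩
  | @cons a b c h p ih =>
    intro hp
    obtain ⟨q, hq⟩ := ih (fun y hy => hp y (by simp [hy]))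
    refine ⟨Walk.cons (show (delVert G x).Adj ⟨a, _⟩ ⟨b, _⟩ from h) q, ?_⟩
    simp only [Walk.map_cons]
    rw [hq]
    rfl

lemma dist_del_eq {u v : V} (hu : u ≠ x) (hv : v ≠ x)
    (q : (delVert G x).Walk ⟨u, hu⟩ ⟨v, hv⟩) (hq : q.length = G.dist u v) :
    q.length = (delVert G x).dist ⟨u, hu⟩ ⟨v, hv⟩ := by
  refine le_antisymm ?_ (SimpleGraph.dist_le q)
  obtain ⟨r, hr⟩ := (Walk.reachable q).exists_walk_length_eq_dist
  have : G.dist u v ≤ (r.map (homDel G x)).length := SimpleGraph.dist_le _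
  rw [Walk.length_map, hr] at this
  omega

/-- Splitting a geodesic at a support vertex. -/
lemma dist_add_of_mem (hG : G.Connected) {u v w : V} (p : G.Walk u v)
    (hl : p.length = G.dist u v) (hw : w ∈ p.support) :
    G.dist u w + G.dist w v = G.dist u v ∧
    (p.takeUntil w hw).length = G.dist u w ∧
    (p.dropUntil w hw).length = G.dist w v := by
  have h1 := SimpleGraph.dist_le (p.takeUntil w hw)
  have h2 := SimpleGraph.dist_le (p.dropUntil w hw)
  have h3 : (p.takeUntil w hw).length + (p.dropUntil w hw).length = p.length := by
    rw [← Walk.length_append, p.take_spec hw]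
  have h4 : G.dist u v ≤ G.dist u w + G.dist w v := hG.dist_triangle
  omega

/-- Applying the general position property of `G - x` to a geodesic of `G`
that avoids `x`. -/
lemma not_geodesic_avoiding (S : Finset {y : V // y ≠ x})
    (hS : IsGPSet (delVert G x) ↑S) {u v w : V}
    (hus : ∃ h : u ≠ x, (⟨u, h⟩ : {y : V // y ≠ x}) ∈ S)
    (hvs : ∃ h : v ≠ x, (⟨v, h⟩ : {y : V // y ≠ x}) ∈ S)
    (hws : ∃ h : w ≠ x, (⟨w, h⟩ : {y : V // y ≠ x}) ∈ S)
    (huv : u ≠ v) (huw : u ≠ w) (hvw : v ≠ w)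
    (p : G.Walk u v) (hp : p.IsPath) (hl : p.length = G.dist u v)
    (hxp : ∀ y ∈ p.support, y ≠ x) (hwp : w ∈ p.support) : False := by
  obtain ⟨hu, hus⟩ := hus
  obtain ⟨hv, hvs⟩ := hvs
  obtain ⟨hw, hws⟩ := hws
  obtain ⟨q, hq⟩ := exists_lift p hxp
  have hlen : q.length = G.dist u v := by
    have h := congrArg Walk.length hq
    rw [Walk.length_map] at h
    exact h.trans hl
  have hqpath : q.IsPath := by
    rw [Walk.isPath_def]
    have : (q.map (homDel G x)).support.Nodup := by rw [hq]; exact hp.support_nodup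
    rw [Walk.support_map] at this
    exact this.of_map _
  have hdist := dist_del_eq hu hv q hlen
  have hwq : (⟨w, hw⟩ : {y : V // y ≠ x}) ∈ q.support := by
    have : w ∈ (q.map (homDel G x)).support := by rw [hq]; exact hwp
    rw [Walk.support_map, List.mem_map] at this
    obtain ⟨a, ha, hav⟩ := this
    have : a = ⟨w, hw⟩ := Subtype.ext hav
    rwa [this] at ha
  exact hS (Finset.mem_coe.mpr hus) (Finset.mem_coe.mpr hvs) (Finset.mem_coe.mpr hws)
    (fun h => huv (congrArg Subtype.val h)) (fun h => huw (congrArg Subtype.val h))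
    (fun h => hvw (congrArg Subtype.val h)) q hqpath hdist hwq

/-- No chain of length three in a gp-set of `G - x`. -/
lemma no_chain (hG : G.Connected) (S : Finset {y : V // y ≠ x})
    (hS : IsGPSet (delVert G x) ↑S) {u w t : V}
    (hus : ∃ h : u ≠ x, (⟨u, h⟩ : {y : V // y ≠ x}) ∈ S)
    (hws : ∃ h : w ≠ x, (⟨w, h⟩ : {y : V // y ≠ x}) ∈ S)
    (hts : ∃ h : t ≠ x, (⟨t, h⟩ : {y : V // y ≠ x}) ∈ S)
    (h1 : Below G x w u) (h2 : Below G x t w) : False := by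
  obtain ⟨hwu, hd1⟩ := h1
  obtain ⟨htw, hd2⟩ := h2
  have hwx : w ≠ x := hws.1
  have htx : t ≠ x := hts.1
  have hposwx : 0 < G.dist w x := (hG.preconnected w x).pos_dist_of_ne hwx
  have hpostx : 0 < G.dist t x := (hG.preconnected t x).pos_dist_of_ne htx
  have hposuw : 0 < G.dist u w := (hG.preconnected u w).pos_dist_of_ne (Ne.symm hwu)
  have hposwt : 0 < G.dist w t := (hG.preconnected w t).pos_dist_of_ne (Ne.symm htw)
  -- distances
  have hut : u ≠ t := by
    intro h
    rw [h] at hd1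
    have hc1 := SimpleGraph.dist_comm (G := G) (u := t) (v := w)
    omega
  obtain ⟨p1, hp1, hl1⟩ := hG.exists_path_of_dist u w
  obtain ⟨p2, hp2, hl2⟩ := hG.exists_path_of_dist w t
  have htri : G.dist u x ≤ G.dist u t + G.dist t x := hG.dist_triangle
  have htri2 : G.dist u t ≤ G.dist u w + G.dist w t := hG.dist_triangle
  have hsum : G.dist u w + G.dist w t = G.dist u t := by omega
  set q : G.Walk u t := p1.append p2 with hqdef
  have hqlen : q.length = G.dist u t := by
    rw [hqdef, Walk.length_append, hl1, hl2, hsum]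
  have hqpath : q.IsPath := q.isPath_of_length_eq_dist hqlen
  have hxq : ∀ y ∈ q.support, y ≠ x := by
    intro y hy hyx
    rw [hyx] at hy
    rw [hqdef, Walk.mem_support_append_iff] at hy
    rcases hy with hy | hy
    · obtain ⟨hsplit, -, -⟩ := dist_add_of_mem hG p1 hl1 hy
      have := SimpleGraph.dist_comm (G := G) (u := x) (v := w)
      omega
    · obtain ⟨hsplit, -, -⟩ := dist_add_of_mem hG p2 hl2 hy
      have := SimpleGraph.dist_comm (G := G) (u := x) (v := t)
      omega
  have hwq : w ∈ q.support := by
    rw [hqdef, Walk.mem_support_append_iff]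
    exact Or.inl p1.end_mem_support
  exact not_geodesic_avoiding S hS hus hts hws hut (Ne.symm hwu) htw q hqpath hqlen hxq hwq

/-- An antichain inside (the projection of) a gp-set of `G - x` is a
gp-set of `G`. -/
lemma gp_of_antichain (hG : G.Connected) (S : Finset {y : V // y ≠ x})
    (hS : IsGPSet (delVert G x) ↑S) (C : Finset V)
    (hCS : ∀ u ∈ C, ∃ h : u ≠ x, (⟨u, h⟩ : {y : V // y ≠ x}) ∈ S)
    (hanti : ∀ u ∈ C, ∀ w ∈ C, ¬ Below G x w u) :
    IsGPSet G ↑C := by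
  intro u v w hu hv hw huv huw hvw p hp hl hwp
  replace hu := Finset.mem_coe.mp hu
  replace hv := Finset.mem_coe.mp hv
  replace hw := Finset.mem_coe.mp hw
  by_cases hx : x ∈ p.support
  · -- the geodesic passes through x, derive comparability
    obtain ⟨hsplit, hlen1, hlen2⟩ := dist_add_of_mem hG p hl hwp
    have hxuv : x ∈ (p.takeUntil w hwp).support ∨ x ∈ (p.dropUntil w hwp).support := by
      rw [← Walk.mem_support_append_iff, p.take_spec hwp]; exact hx
    have hwx : w ≠ x := (hCS w hw).1
    rcases hxuv with hx1 | hx1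
    · -- x between u and w : Below G x w v
      obtain ⟨hs1, -, -⟩ := dist_add_of_mem hG (p.takeUntil w hwp) hlen1 hx1
      refine hanti v hv w hw ⟨hvw.symm, ?_⟩
      have t1 : G.dist u v ≤ G.dist u x + G.dist x v := hG.dist_triangle
      have t2 : G.dist x v ≤ G.dist x w + G.dist w v := hG.dist_triangle
      have c1 := SimpleGraph.dist_comm (G := G) (u := x) (v := v)
      have c2 := SimpleGraph.dist_comm (G := G) (u := x) (v := w)
      have c3 := SimpleGraph.dist_comm (G := G) (u := w) (v := v)
      omega
    · -- x between w and v : Below G x w u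
      obtain ⟨hs1, -, -⟩ := dist_add_of_mem hG (p.dropUntil w hwp) hlen2 hx1
      refine hanti u hu w hw ⟨huw.symm, ?_⟩
      have t1 : G.dist u v ≤ G.dist u x + G.dist x v := hG.dist_triangle
      have t2 : G.dist u x ≤ G.dist u w + G.dist w x := hG.dist_triangle
      omega
  · -- the geodesic avoids x : contradicts gp in G - x
    have hxp : ∀ y ∈ p.support, y ≠ x := fun y hy hyx => hx (hyx ▸ hy)
    exact not_geodesic_avoiding S hS (hCS u hu) (hCS v hv) (hCS w hw)
      huv huw hvw p hp hl hxp hwp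

end GPAux

open GPAux in
/-- For a finite connected graph `G` and a vertex `x`,
`gp(G - x) ≤ 2·gp(G)`. -/
theorem stmt_0 {V : Type*} [Fintype V] [DecidableEq V] (G : SimpleGraph V)
    (hG : G.Connected) (x : V) :
    gpNum (delVert G x) ≤ 2 * gpNum G := by
  classical
  -- the defining set for gpNum of G - x
  have hne : ({n : ℕ | ∃ S : Finset {y : V // y ≠ x},
      IsGPSet (delVert G x) ↑S ∧ S.card = n}).Nonempty := by
    refine ⟨0, ∅, ?_, rfl⟩
    intro u v w hu _ _ _ _ _
    simp at hu
  have hbdd : BddAbove {n : ℕ | ∃ S : Finset {y : V // y ≠ x},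
      IsGPSet (delVert G x) ↑S ∧ S.card = n} := by
    refine ⟨Fintype.card {y : V // y ≠ x}, ?_⟩
    rintro n ⟨S, -, rfl⟩
    exact Finset.card_le_univ S
  have hmem := Nat.sSup_mem hne hbdd
  obtain ⟨S, hS, hcard⟩ := hmem
  have hGP : gpNum (delVert G x) = S.card := hcard.symm
  -- project to V
  set S' : Finset V := S.image Subtype.val with hS'def
  have hcard' : S'.card = S.card :=
    Finset.card_image_of_injective S Subtype.val_injective
  have hmemS' : ∀ u ∈ S', ∃ h : u ≠ x, (⟨u, h⟩ : {y : V // y ≠ x}) ∈ S := by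
    intro u hu
    rw [hS'def, Finset.mem_image] at hu
    obtain ⟨a, ha, rfl⟩ := hu
    exact ⟨a.2, by simpa using ha⟩
  -- split into two antichains
  set A : Finset V := S'.filter (fun u => ∀ w ∈ S', ¬ Below G x w u) with hAdef
  set B : Finset V := S' \ A with hBdef
  have hAsub : A ⊆ S' := Finset.filter_subset _ _
  have hBsub : B ⊆ S' := Finset.sdiff_subset
  have hcards : B.card + A.card = S'.card := Finset.card_sdiff_add_card_eq_card hAsub
  -- A is an antichain
  have hgpA : IsGPSet G ↑A := by
    refine gp_of_antichain hG S hS A (fun u hu => hmemS' u (hAsub hu)) ?_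
    intro u hu w hw hB
    rw [hAdef, Finset.mem_filter] at hu
    exact hu.2 w (hAsub hw) hB
  -- B is an antichain
  have hgpB : IsGPSet G ↑B := by
    refine gp_of_antichain hG S hS B (fun u hu => hmemS' u (hBsub hu)) ?_
    intro u hu w hw hB
    have hwS' : w ∈ S' := hBsub hw
    have hwnA : w ∉ A := (Finset.mem_sdiff.mp hw).2
    rw [hAdef, Finset.mem_filter] at hwnA
    push_neg at hwnA
    obtain ⟨t, htS', hbt⟩ := hwnA hwS'
    exact no_chain hG S hS (hmemS' u (hBsub hu)) (hmemS' w hwS') (hmemS' t htS') hB hbt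
  -- conclude
  have hbddG : BddAbove {n : ℕ | ∃ S : Finset V, IsGPSet G ↑S ∧ S.card = n} := by
    refine ⟨Fintype.card V, ?_⟩
    rintro n ⟨T, -, rfl⟩
    exact Finset.card_le_univ T
  have hA_le : A.card ≤ gpNum G := le_csSup hbddG ⟨A, hgpA, rfl⟩
  have hB_le : B.card ≤ gpNum G := le_csSup hbddG ⟨B, hgpB, rfl⟩
  have : gpNum (delVert G x) = S'.card := by rw [hGP, hcard']
  omega
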